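/- Let 1 ≤ p ≤ ∞, let τ be a bijective, measure-preserving, ergodic transformation of [0,1] whose discrepancy satisfies D_n = O(1/(ln n)^{3+ε}) for some ε > 0, and let T be the operator on L^p([0,1]) defined by Tf = ṽ·(f∘τ), where ṽ is the normalized generalized-polynomial weight. Then there exists a subadditive function w : ℕ → [0,∞) with ∑_{n≥1} w(n)/n² < ∞ such that ‖T^n f‖_{L^p([0,1])} ≤ e^{w(n)}·‖f‖_{L^p([0,1])} for every n ∈ ℕ and every f ∈ L^p([0,1]). -/

import Mathlib

open MeasureTheory Set Filter
open scoped ENNReal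

noncomputable section

open scoped Classical in
/-- The number of indices `n ∈ {1,…,N}` with `ω n ∈ [a,b)`. -/
def discCount (ω : ℕ → ℝ) (N : ℕ) (a b : ℝ) : ℕ :=
  ((Finset.Icc 1 N).filter fun n => ω n ∈ Set.Ico a b).card

/-- Discrepancy `D_N(ω)` of a sequence `(ω n)_{n ≥ 1}` of points of `[0,1)`. -/
def discrepancy (ω : ℕ → ℝ) (N : ℕ) : ℝ :=
  sSup { d : ℝ | ∃ a b : ℝ, 0 ≤ a ∧ a < b ∧ b ≤ 1 ∧
    d = |(discCount ω N a b : ℝ) / N - (b - a)| }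

/-- `D_N = sup_{x ∈ [0,1)} D_N((τⁿ x)_{n ≥ 1})`. -/
def tauDiscrepancy (τ : ℝ → ℝ) (N : ℕ) : ℝ :=
  sSup { d : ℝ | ∃ x ∈ Set.Ico (0:ℝ) 1, d = discrepancy (fun n => τ^[n] x) N }

/-- `XX x₀ = X₀ + X₀'` where `X₀ = x₀ - x₀ ln x₀` and `X₀' = (1-x₀) - (1-x₀) ln (1-x₀)`.
(Since `Real.log 0 = 0`, the convention `X₀ + X₀' = 1` for `x₀ ∈ {0,1}` holds
automatically.) -/
def XX (x : ℝ) : ℝ :=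
  (x - x * Real.log x) + ((1 - x) - (1 - x) * Real.log (1 - x))

/-- The normalized generalized-polynomial weight
`ṽ x = exp (∑ᵢ sᵢ (Xᵢ + Xᵢ')) * ∏ᵢ σᵢ(x - xᵢ)^{sᵢ}`. -/
def vtilde (l : ℕ) (s x₀ : Fin (l+1) → ℝ) (σ : Fin (l+1) → ℝ → ℝ) (x : ℝ) : ℝ :=
  Real.exp (∑ i, s i * XX (x₀ i)) * ∏ i, (σ i (x - x₀ i)) ^ (s i)

namespace PPB

lemma discCount_le (ω : ℕ → ℝ) (N : ℕ) (a b : ℝ) : discCount ω N a b ≤ N := by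
  classical
  unfold discCount
  refine le_trans (Finset.card_filter_le _ _) ?_
  simp

lemma abs_d_le_one (ω : ℕ → ℝ) {N : ℕ} (hN : 1 ≤ N) {a b : ℝ}
    (ha : 0 ≤ a) (hab : a < b) (hb : b ≤ 1) :
    |(discCount ω N a b : ℝ) / N - (b - a)| ≤ 1 := by
  have hN0 : (0:ℝ) < N := by exact_mod_cast hN
  have h1 : (discCount ω N a b : ℝ) / N ≤ 1 := by
    rw [div_le_one hN0]
    exact_mod_cast discCount_le ω N a b
  have h0 : (0:ℝ) ≤ (discCount ω N a b : ℝ) / N := by positivity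
  rw [abs_le]
  constructor <;> nlinarith

lemma le_discrepancy (ω : ℕ → ℝ) {N : ℕ} (hN : 1 ≤ N) {a b : ℝ}
    (ha : 0 ≤ a) (hab : a < b) (hb : b ≤ 1) :
    |(discCount ω N a b : ℝ) / N - (b - a)| ≤ discrepancy ω N := by
  apply le_csSup
  · refine ⟨1, ?_⟩
    rintro d ⟨a', b', ha', hab', hb', rfl⟩
    exact abs_d_le_one ω hN ha' hab' hb'
  · exact ⟨a, b, ha, hab, hb, rfl⟩

lemma discrepancy_nonneg (ω : ℕ → ℝ) {N : ℕ} (hN : 1 ≤ N) : 0 ≤ discrepancy ω N :=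
  le_trans (abs_nonneg _) (le_discrepancy ω hN le_rfl one_pos le_rfl)

lemma discrepancy_le_one (ω : ℕ → ℝ) {N : ℕ} (hN : 1 ≤ N) : discrepancy ω N ≤ 1 := by
  apply csSup_le
  · exact ⟨_, ⟨0, 1, le_rfl, one_pos, le_rfl, rfl⟩⟩
  · rintro d ⟨a, b, ha, hab, hb, rfl⟩
    exact abs_d_le_one ω hN ha hab hb

lemma le_tauDiscrepancy (τ : ℝ → ℝ) {N : ℕ} (hN : 1 ≤ N) {x : ℝ} (hx : x ∈ Set.Ico (0:ℝ) 1) :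
    discrepancy (fun n => τ^[n] x) N ≤ tauDiscrepancy τ N := by
  apply le_csSup
  · refine ⟨1, ?_⟩
    rintro d ⟨y, hy, rfl⟩
    exact discrepancy_le_one _ hN
  · exact ⟨x, hx, rfl⟩

lemma tauDiscrepancy_nonneg (τ : ℝ → ℝ) {N : ℕ} (hN : 1 ≤ N) : 0 ≤ tauDiscrepancy τ N :=
  le_trans (discrepancy_nonneg _ hN)
    (le_tauDiscrepancy τ hN ⟨le_rfl, one_pos⟩)

lemma count_ge (τ : ℝ → ℝ) {N : ℕ} (hN : 1 ≤ N) {x : ℝ} (hx : x ∈ Set.Ico (0:ℝ) 1)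
    {a b : ℝ} (ha : 0 ≤ a) (hab : a < b) (hb : b ≤ 1) :
    (N : ℝ) * (b - a) - N * tauDiscrepancy τ N ≤ discCount (fun n => τ^[n] x) N a b := by
  have hN0 : (0:ℝ) < N := by exact_mod_cast hN
  have h := (le_discrepancy (fun n => τ^[n] x) hN ha hab hb).trans (le_tauDiscrepancy τ hN hx)
  rw [abs_le] at h
  have h2 : (b - a) - tauDiscrepancy τ N ≤ (discCount (fun n => τ^[n] x) N a b : ℝ) / N := by
    linarith [h.1]
  have := mul_le_mul_of_nonneg_left h2 hN0.le
  rw [mul_div_cancel₀ _ hN0.ne'] at this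
  linarith




/-- For `0 < c ≤ y`: `c - c log c ≤ y - c log y`. -/
lemma SL {c y : ℝ} (hc : 0 < c) (hcy : c ≤ y) :
    c - c * Real.log c ≤ y - c * Real.log y := by
  have hy : 0 < y := lt_of_lt_of_le hc hcy
  have h1 : Real.log (y / c) ≤ y / c - 1 := Real.log_le_sub_one_of_pos (by positivity)
  have h2 : Real.log (y / c) = Real.log y - Real.log c := Real.log_div hy.ne' hc.ne'
  have h3 : c * Real.log (y / c) ≤ c * (y / c - 1) := by
    apply mul_le_mul_of_nonneg_left h1 hc.le
  rw [h2, mul_sub, mul_sub, mul_div_cancel₀ _ hc.ne'] at h3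
  linarith

/-- down-set card: `log t ≤ card {j ∈ [1,J] : t ≤ r^j} * log r`. -/
lemma log_le_card_mul_log {t r : ℝ} (ht0 : 0 < t) (ht1 : t ≤ 1) (hr0 : 0 < r) (hr1 : r < 1)
    (J : ℕ) :
    Real.log t ≤ (((Finset.Icc 1 J).filter (fun j => t ≤ r ^ j)).card : ℝ) * Real.log r := by
  classical
  set S := (Finset.Icc 1 J).filter (fun j => t ≤ r ^ j) with hS
  by_cases hne : S.Nonempty
  · set m := S.max' hne with hm
    have hmS : m ∈ S := S.max'_mem hne
    have hmIcc := Finset.mem_filter.mp hmS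
    have htm : t ≤ r ^ m := hmIcc.2
    have hsub : S ⊆ Finset.Icc 1 m := by
      intro j hj
      rw [Finset.mem_Icc]
      exact ⟨(Finset.mem_Icc.mp (Finset.mem_filter.mp hj).1).1, S.le_max' j hj⟩
    have hsup : Finset.Icc 1 m ⊆ S := by
      intro j hj
      rw [Finset.mem_Icc] at hj
      refine Finset.mem_filter.mpr ⟨Finset.mem_Icc.mpr ⟨hj.1, le_trans hj.2 (Finset.mem_Icc.mp hmIcc.1).2⟩, ?_⟩
      exact le_trans htm (pow_le_pow_of_le_one hr0.le hr1.le hj.2)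
    have hcard : S.card = m := by
      rw [Finset.Subset.antisymm hsub hsup, Nat.card_Icc]
      omega
    rw [hcard]
    calc Real.log t ≤ Real.log (r ^ m) := Real.log_le_log ht0 htm
      _ = (m : ℝ) * Real.log r := by rw [Real.log_pow]
  · have hc0 : S.card = 0 := by
      rw [Finset.card_eq_zero]
      exact Finset.not_nonempty_iff_eq_empty.mp hne
    rw [hc0]
    simpa using Real.log_nonpos ht0.le ht1

/-- key calculus inequality. -/
lemma key_calc {c r : ℝ} (hc0 : 0 ≤ c) (hc1 : c ≤ 1) (hr : 1/2 ≤ r) (hr1 : r < 1) (J : ℕ) :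
    c - c * Real.log c ≤
      Real.log (1/r) * ∑ j ∈ Finset.Icc 1 J, min c (r ^ j) + r ^ J + 3 * (1 - r) := by
  classical
  have hr0 : (0:ℝ) < r := by linarith
  have hlog1r : Real.log (1/r) = -Real.log r := by
    rw [one_div, Real.log_inv]
  have hlogpos : 0 ≤ Real.log (1/r) := by
    rw [hlog1r, neg_nonneg]
    exact Real.log_nonpos hr0.le hr1.le
  have hlog_ge : 1 - r ≤ Real.log (1/r) := by
    have := Real.log_le_sub_one_of_pos hr0
    rw [hlog1r]; linarith
  have hlog_le : Real.log (1/r) ≤ (1 - r) / r := by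
    have := Real.log_le_sub_one_of_pos (show (0:ℝ) < 1/r by positivity)
    calc Real.log (1/r) ≤ 1/r - 1 := this
      _ = (1-r)/r := by field_simp
  rcases eq_or_lt_of_le hc0 with hc | hc
  · -- c = 0
    rw [← hc]
    simp only [zero_mul, sub_zero, Real.log_zero, mul_zero, zero_sub, neg_zero]
    have hsum : (0:ℝ) ≤ ∑ j ∈ Finset.Icc 1 J, min (0:ℝ) (r ^ j) := by
      apply Finset.sum_nonneg
      intro j _
      rw [min_eq_left (by positivity)]
    nlinarith [pow_pos hr0 J]
  -- 0 < c
  by_cases hcase : c ≤ r ^ J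
  · -- case A : min = c everywhere
    have hmin : ∀ j ∈ Finset.Icc 1 J, min c (r ^ j) = c := by
      intro j hj
      rw [Finset.mem_Icc] at hj
      exact min_eq_left (le_trans hcase (pow_le_pow_of_le_one hr0.le hr1.le hj.2))
    rw [Finset.sum_congr rfl hmin, Finset.sum_const, Nat.card_Icc]
    have hcard : (J + 1 - 1) = J := by omega
    rw [hcard, nsmul_eq_mul]
    have hSL := SL hc hcase
    have hlogpow : Real.log (r ^ J) = (J:ℝ) * Real.log r := by rw [Real.log_pow]
    rw [hlogpow] at hSL
    have hring : r ^ J - c * ((J:ℝ) * Real.log r) = Real.log (1/r) * ((J:ℝ) * c) + r ^ J := by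
      rw [hlog1r]; ring
    linarith
  · -- case B : r^J < c
    push_neg at hcase
    set S := (Finset.Icc 1 J).filter (fun j => c ≤ r ^ j) with hSdef
    set m := S.card with hmdef
    have hJ1 : 1 ≤ J := by
      by_contra h
      have : J = 0 := by omega
      rw [this] at hcase
      simp at hcase
      linarith
    -- S = Icc 1 m
    have hSIcc : S = Finset.Icc 1 m := by
      by_cases hne : S.Nonempty
      · set mm := S.max' hne with hmm
        have hmS : mm ∈ S := S.max'_mem hne
        have hmIcc := Finset.mem_filter.mp hmS
        have hsub : S ⊆ Finset.Icc 1 mm := by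
          intro j hj
          rw [Finset.mem_Icc]
          exact ⟨(Finset.mem_Icc.mp (Finset.mem_filter.mp hj).1).1, S.le_max' j hj⟩
        have hsup : Finset.Icc 1 mm ⊆ S := by
          intro j hj
          rw [Finset.mem_Icc] at hj
          refine Finset.mem_filter.mpr ⟨Finset.mem_Icc.mpr ⟨hj.1, le_trans hj.2 (Finset.mem_Icc.mp hmIcc.1).2⟩, ?_⟩
          exact le_trans hmIcc.2 (pow_le_pow_of_le_one hr0.le hr1.le hj.2)
        have : S = Finset.Icc 1 mm := Finset.Subset.antisymm hsub hsup
        rw [this, hmdef]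
        congr 1
        rw [this, Nat.card_Icc]; omega
      · rw [Finset.not_nonempty_iff_eq_empty] at hne
        rw [hmdef, hne]
        simp
    have hmJ : m < J := by
      have hJS : J ∉ S := by
        rw [hSdef, Finset.mem_filter]
        push_neg
        intro _
        linarith
      have hsub : S ⊆ Finset.Icc 1 J := Finset.filter_subset _ _
      have : m ≤ J := by
        rw [hmdef]
        calc S.card ≤ (Finset.Icc 1 J).card := Finset.card_le_card hsub
          _ = J := by rw [Nat.card_Icc]; omega
      rcases eq_or_lt_of_le this with h | h
      · exfalso
        apply hJS
        rw [hSIcc, Finset.mem_Icc]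
        omega
      · exact h
    have hclem : c ≤ r ^ m := by
      rcases Nat.eq_zero_or_pos m with h | h
      · rw [h, pow_zero]; exact hc1
      · have : m ∈ S := by rw [hSIcc, Finset.mem_Icc]; omega
        exact (Finset.mem_filter.mp this).2
    have hcgt : r ^ (m+1) < c := by
      have : m + 1 ∉ S := by
        rw [hSIcc, Finset.mem_Icc]; omega
      rw [hSdef, Finset.mem_filter, Finset.mem_Icc] at this
      push_neg at this
      exact this (by omega)
    -- sum lower bound
    have hsum_ge : (m : ℝ) * c + ∑ j ∈ Finset.Ico (m+1) (J+1), r ^ j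
        ≤ ∑ j ∈ Finset.Icc 1 J, min c (r ^ j) := by
      have hIccIco : Finset.Icc 1 J = Finset.Ico 1 (J+1) := by
        rw [Finset.Ico_add_one_right_eq_Icc]
      rw [hIccIco, ← Finset.sum_Ico_consecutive _ (by omega : 1 ≤ m+1) (by omega : m+1 ≤ J+1)]
      have h1 : (m:ℝ) * c ≤ ∑ j ∈ Finset.Ico 1 (m+1), min c (r ^ j) := by
        have : ∀ j ∈ Finset.Ico 1 (m+1), min c (r ^ j) = c := by
          intro j hj
          rw [Finset.mem_Ico] at hj
          apply min_eq_left
          exact le_trans hclem (pow_le_pow_of_le_one hr0.le hr1.le (by omega))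
        rw [Finset.sum_congr rfl this, Finset.sum_const, Nat.card_Ico]
        simp
      have h2 : ∑ j ∈ Finset.Ico (m+1) (J+1), r ^ j
          ≤ ∑ j ∈ Finset.Ico (m+1) (J+1), min c (r ^ j) := by
        apply Finset.sum_le_sum
        intro j hj
        rw [Finset.mem_Ico] at hj
        have : r ^ j ≤ r ^ (m+1) := pow_le_pow_of_le_one hr0.le hr1.le hj.1
        rw [min_eq_right (by linarith)]
      linarith
    have hgeom : ∑ j ∈ Finset.Ico (m+1) (J+1), r ^ j = (r ^ (m+1) - r ^ (J+1)) / (1 - r) := by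
      rw [geom_sum_Ico hr1.ne (by omega)]
      rw [div_eq_div_iff (by linarith) (by linarith)]
      ring
    -- final assembly
    have hL : c - c * Real.log c ≤ c + c * ((m:ℝ)+1) * Real.log (1/r) := by
      have hlogc : Real.log (r ^ (m+1)) ≤ Real.log c := Real.log_le_log (by positivity) hcgt.le
      rw [Real.log_pow] at hlogc
      push_cast at hlogc
      have : -(c * Real.log c) ≤ c * ((m:ℝ)+1) * Real.log (1/r) := by
        rw [hlog1r]
        nlinarith
      linarith
    have hr_m : c ≤ r ^ (m+1) + (1 - r) := by
      have h1 : r ^ m ≤ 1 := pow_le_one₀ hr0.le hr1.le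
      have : r ^ m = r ^ (m+1) + r ^ m * (1-r) := by ring
      nlinarith
    have hterm1 : c * Real.log (1/r) ≤ 2 * (1 - r) := by
      have h2r : (1-r)/r ≤ 2*(1-r) := by
        rw [div_le_iff₀ hr0]
        nlinarith
      calc c * Real.log (1/r) ≤ 1 * Real.log (1/r) := by
            apply mul_le_mul_of_nonneg_right hc1 hlogpos
        _ = Real.log (1/r) := by ring
        _ ≤ (1-r)/r := hlog_le
        _ ≤ 2*(1-r) := h2r
    have hRHSge : Real.log (1/r) * ((m:ℝ) * c) + r ^ (m+1) + 3 * (1-r)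
        ≤ Real.log (1/r) * ∑ j ∈ Finset.Icc 1 J, min c (r ^ j) + r ^ J + 3 * (1 - r) := by
      have hgs : r ^ (m+1) - r ^ (J+1) ≤ Real.log (1/r) * ((r ^ (m+1) - r ^ (J+1)) / (1-r)) := by
        have hge0 : 0 ≤ r ^ (m+1) - r ^ (J+1) := by
          have := pow_le_pow_of_le_one hr0.le hr1.le (show m+1 ≤ J+1 by omega)
          linarith
        have h1r : 0 < 1 - r := by linarith
        calc r ^ (m+1) - r ^ (J+1) = (1-r) * ((r ^ (m+1) - r ^ (J+1)) / (1-r)) := by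
              field_simp
          _ ≤ Real.log (1/r) * ((r ^ (m+1) - r ^ (J+1)) / (1-r)) := by
              apply mul_le_mul_of_nonneg_right hlog_ge (by positivity)
      have hJJ : r ^ (J+1) ≤ r ^ J := pow_le_pow_of_le_one hr0.le hr1.le (Nat.le_succ J)
      have hmono := mul_le_mul_of_nonneg_left hsum_ge hlogpos
      rw [mul_add, hgeom] at hmono
      linarith
    refine le_trans ?_ hRHSge
    have hringB : c * ((m:ℝ)+1) * Real.log (1/r) = Real.log (1/r) * ((m:ℝ) * c) + c * Real.log (1/r) := by
      ring
    linarith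



/-- the absolute-value majorant of `vtilde`. -/
def vabs (l : ℕ) (s x₀ : Fin (l+1) → ℝ) (x : ℝ) : ℝ :=
  Real.exp (∑ i, s i * XX (x₀ i)) * ∏ i, |x - x₀ i| ^ (s i)

lemma vabs_nonneg (l : ℕ) (s x₀ : Fin (l+1) → ℝ) (x : ℝ) : 0 ≤ vabs l s x₀ x := by
  unfold vabs
  apply mul_nonneg (Real.exp_nonneg _)
  apply Finset.prod_nonneg
  intro i _
  exact Real.rpow_nonneg (abs_nonneg _) _

lemma norm_vtilde_le (l : ℕ) (s x₀ : Fin (l+1) → ℝ) (σ : Fin (l+1) → ℝ → ℝ)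
    (hσ : ∀ i, σ i = id ∨ σ i = fun y => |y|) (x : ℝ) :
    ‖(vtilde l s x₀ σ x : ℂ)‖ ≤ vabs l s x₀ x := by
  rw [Complex.norm_real, Real.norm_eq_abs]
  unfold vtilde vabs
  rw [abs_mul, abs_of_nonneg (Real.exp_nonneg _), Finset.abs_prod]
  apply mul_le_mul_of_nonneg_left _ (Real.exp_nonneg _)
  apply Finset.prod_le_prod
  · intro i _; exact abs_nonneg _
  · intro i _
    rcases hσ i with h | h
    · rw [h]
      exact Real.abs_rpow_le_abs_rpow _ _
    · rw [h]
      simp only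
      rw [abs_of_nonneg (Real.rpow_nonneg (abs_nonneg _) _)]

lemma orbit_log_sum (τ : ℝ → ℝ) (hτbij : Set.BijOn τ (Set.Icc 0 1) (Set.Icc 0 1))
    {x : ℝ} (hx : x ∈ Set.Ico (0:ℝ) 1) {m : ℕ} (hm : 1 ≤ m)
    {c : ℝ} (hc0 : 0 ≤ c) (hc1 : c ≤ 1)
    {r : ℝ} (hr : 1/2 ≤ r) (hr1 : r < 1) (J : ℕ)
    (hne : ∀ k ∈ Finset.Icc 1 m, τ^[k] x ≠ c) :
    (m:ℝ) * XX c + ∑ k ∈ Finset.Icc 1 m, Real.log |τ^[k] x - c| ≤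
      (m:ℝ) * (2 * r ^ J + 6 * (1 - r)) +
        2 * m * tauDiscrepancy τ m * J * Real.log (1/r) := by
  classical
  have hr0 : (0:ℝ) < r := by linarith
  set D := tauDiscrepancy τ m with hDdef
  have hD0 : 0 ≤ D := tauDiscrepancy_nonneg τ hm
  set ω := fun n => τ^[n] x with hω
  have horb : ∀ k, ω k ∈ Set.Icc (0:ℝ) 1 := by
    intro k
    exact Set.MapsTo.iterate hτbij.mapsTo k (Set.mem_Icc_of_Ico hx)
  have ht0 : ∀ k ∈ Finset.Icc 1 m, 0 < |ω k - c| := fun k hk =>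
    abs_pos.mpr (sub_ne_zero.mpr (hne k hk))
  have ht1 : ∀ k, |ω k - c| ≤ 1 := by
    intro k
    have h := horb k
    rw [Set.mem_Icc] at h
    rw [abs_le]
    constructor <;> linarith
  have hm0 : (0:ℝ) ≤ (m:ℝ) := Nat.cast_nonneg m
  -- per-j count lower bound
  have hcount : ∀ j ∈ Finset.Icc 1 J,
      (m:ℝ) * min c (r^j) + (m:ℝ) * min (1-c) (r^j) - 2*(m:ℝ)*D ≤
        (((Finset.Icc 1 m).filter (fun k => |ω k - c| ≤ r ^ j)).card : ℝ) := by
    intro j _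
    have hrj : 0 < r ^ j := pow_pos hr0 j
    set δ₁ := min c (r ^ j) with hδ₁
    set δ₂ := min (1-c) (r ^ j) with hδ₂
    have hδ₁c : δ₁ ≤ c := min_le_left _ _
    have hδ₂c : δ₂ ≤ 1 - c := min_le_left _ _
    have hδ₁r : δ₁ ≤ r ^ j := min_le_right _ _
    have hδ₂r : δ₂ ≤ r ^ j := min_le_right _ _
    have hδ₁0 : 0 ≤ δ₁ := le_min hc0 hrj.le
    have hδ₂0 : 0 ≤ δ₂ := le_min (by linarith) hrj.le
    set FA := (Finset.Icc 1 m).filter (fun k => ω k ∈ Set.Ico (c - δ₁) c) with hFA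
    set FB := (Finset.Icc 1 m).filter (fun k => ω k ∈ Set.Ico c (c + δ₂)) with hFB
    have hAcard : (m:ℝ) * δ₁ - (m:ℝ) * D ≤ (FA.card : ℝ) := by
      rcases eq_or_lt_of_le hδ₁0 with h | h
      · have h0 : (m:ℝ) * δ₁ = 0 := by rw [← h]; ring
        have h1 : (0:ℝ) ≤ (FA.card : ℝ) := Nat.cast_nonneg _
        nlinarith [mul_nonneg hm0 hD0]
      · have hcg := count_ge τ hm hx (a := c - δ₁) (b := c) (by linarith) (by linarith) hc1
        have hEq : discCount ω m (c - δ₁) c = FA.card := rfl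
        rw [hEq] at hcg
        have hring : (m:ℝ) * (c - (c - δ₁)) = (m:ℝ) * δ₁ := by ring
        rw [hring] at hcg
        linarith
    have hBcard : (m:ℝ) * δ₂ - (m:ℝ) * D ≤ (FB.card : ℝ) := by
      rcases eq_or_lt_of_le hδ₂0 with h | h
      · have h0 : (m:ℝ) * δ₂ = 0 := by rw [← h]; ring
        have h1 : (0:ℝ) ≤ (FB.card : ℝ) := Nat.cast_nonneg _
        nlinarith [mul_nonneg hm0 hD0]
      · have hcg := count_ge τ hm hx (a := c) (b := c + δ₂) hc0 (by linarith) (by linarith)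
        have hEq : discCount ω m c (c + δ₂) = FB.card := rfl
        rw [hEq] at hcg
        have hring : (m:ℝ) * (c + δ₂ - c) = (m:ℝ) * δ₂ := by ring
        rw [hring] at hcg
        linarith
    have hdisj : Disjoint FA FB := by
      rw [Finset.disjoint_left]
      intro k hkA hkB
      have h1 := (Finset.mem_filter.mp hkA).2
      have h2 := (Finset.mem_filter.mp hkB).2
      rw [Set.mem_Ico] at h1 h2
      linarith [h1.2, h2.1]
    have hsub : FA ∪ FB ⊆ (Finset.Icc 1 m).filter (fun k => |ω k - c| ≤ r ^ j) := by
      intro k hk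
      rcases Finset.mem_union.mp hk with h | h
      · have h1 := Finset.mem_filter.mp h
        rw [Set.mem_Ico] at h1
        refine Finset.mem_filter.mpr ⟨h1.1, ?_⟩
        rw [abs_le]
        constructor <;> [linarith [h1.2.1]; linarith [h1.2.2]]
      · have h1 := Finset.mem_filter.mp h
        rw [Set.mem_Ico] at h1
        refine Finset.mem_filter.mpr ⟨h1.1, ?_⟩
        rw [abs_le]
        constructor <;> [linarith [h1.2.1]; linarith [h1.2.2]]
    have hun : FA.card + FB.card ≤
        ((Finset.Icc 1 m).filter (fun k => |ω k - c| ≤ r ^ j)).card := by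
      rw [← Finset.card_union_of_disjoint hdisj]
      exact Finset.card_le_card hsub
    have hun' : (FA.card : ℝ) + (FB.card : ℝ) ≤
        (((Finset.Icc 1 m).filter (fun k => |ω k - c| ≤ r ^ j)).card : ℝ) := by
      exact_mod_cast hun
    linarith
  -- per-k log bound
  have hklog : ∀ k ∈ Finset.Icc 1 m, Real.log |ω k - c| ≤
      (((Finset.Icc 1 J).filter (fun j => |ω k - c| ≤ r ^ j)).card : ℝ) * Real.log r :=
    fun k hk => log_le_card_mul_log (ht0 k hk) (ht1 k) hr0 hr1 J
  -- double counting
  have hswapN : ∑ k ∈ Finset.Icc 1 m, ((Finset.Icc 1 J).filter (fun j => |ω k - c| ≤ r ^ j)).card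
      = ∑ j ∈ Finset.Icc 1 J, ((Finset.Icc 1 m).filter (fun k => |ω k - c| ≤ r ^ j)).card := by
    simp_rw [Finset.card_filter]
    exact Finset.sum_comm 

  have hsum1 : ∑ k ∈ Finset.Icc 1 m, Real.log |ω k - c| ≤
      ((∑ j ∈ Finset.Icc 1 J, ((Finset.Icc 1 m).filter (fun k => |ω k - c| ≤ r ^ j)).card : ℕ) : ℝ)
        * Real.log r := by
    calc ∑ k ∈ Finset.Icc 1 m, Real.log |ω k - c|
        ≤ ∑ k ∈ Finset.Icc 1 m,
            (((Finset.Icc 1 J).filter (fun j => |ω k - c| ≤ r ^ j)).card : ℝ) * Real.log r :=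
          Finset.sum_le_sum hklog
      _ = ((∑ k ∈ Finset.Icc 1 m,
            ((Finset.Icc 1 J).filter (fun j => |ω k - c| ≤ r ^ j)).card : ℕ) : ℝ) * Real.log r := by
          rw [← Finset.sum_mul]
          push_cast
          ring
      _ = _ := by rw [hswapN]
  have hlogr_neg : Real.log r ≤ 0 := Real.log_nonpos hr0.le hr1.le
  set S₁ := ∑ j ∈ Finset.Icc 1 J, min c (r^j) with hS₁
  set S₂ := ∑ j ∈ Finset.Icc 1 J, min (1-c) (r^j) with hS₂
  have hLB : (m:ℝ) * S₁ + (m:ℝ) * S₂ - 2*(m:ℝ)*D*J ≤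
      ((∑ j ∈ Finset.Icc 1 J, ((Finset.Icc 1 m).filter (fun k => |ω k - c| ≤ r ^ j)).card : ℕ) : ℝ) := by
    have h := Finset.sum_le_sum hcount
    have hexp : ∑ j ∈ Finset.Icc 1 J,
        ((m:ℝ) * min c (r^j) + (m:ℝ) * min (1-c) (r^j) - 2*(m:ℝ)*D)
        = (m:ℝ) * S₁ + (m:ℝ) * S₂ - 2*(m:ℝ)*D*J := by
      rw [Finset.sum_sub_distrib, Finset.sum_add_distrib, ← Finset.mul_sum, ← Finset.mul_sum,
        Finset.sum_const, Nat.card_Icc, Nat.add_sub_cancel, nsmul_eq_mul]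
      ring
    rw [hexp] at h
    refine le_trans h ?_
    push_cast
    exact le_rfl
  have hsum2 : ∑ k ∈ Finset.Icc 1 m, Real.log |ω k - c| ≤
      ((m:ℝ) * S₁ + (m:ℝ) * S₂ - 2*(m:ℝ)*D*(J:ℝ)) * Real.log r :=
    le_trans hsum1 (mul_le_mul_of_nonpos_right hLB hlogr_neg)
  -- key calc twice
  have kc1 := key_calc hc0 hc1 hr hr1 J
  have kc2 := key_calc (c := 1 - c) (by linarith) (by linarith) hr hr1 J
  have hXXle : XX c ≤ Real.log (1/r) * (S₁ + S₂) + 2*r^J + 6*(1-r) := by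
    have hdist : Real.log (1/r) * (S₁ + S₂) = Real.log (1/r) * S₁ + Real.log (1/r) * S₂ := by
      ring
    unfold XX
    rw [hdist]
    linarith
  have hXXm : (m:ℝ) * XX c ≤ (m:ℝ) * (Real.log (1/r) * (S₁ + S₂)) + (m:ℝ)*(2*r^J) + (m:ℝ)*(6*(1-r)) := by
    have := mul_le_mul_of_nonneg_left hXXle hm0
    nlinarith [this]
  have hlog1r : Real.log (1/r) = -Real.log r := by rw [one_div, Real.log_inv]
  have hsumf : ∑ k ∈ Finset.Icc 1 m, Real.log |ω k - c| ≤
      -((m:ℝ) * (Real.log (1/r) * (S₁ + S₂))) + 2*(m:ℝ)*D*(J:ℝ)*Real.log (1/r) := by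
    have heq : ((m:ℝ) * S₁ + (m:ℝ) * S₂ - 2*(m:ℝ)*D*(J:ℝ)) * Real.log r
        = -((m:ℝ) * (Real.log (1/r) * (S₁ + S₂))) + 2*(m:ℝ)*D*(J:ℝ)*Real.log (1/r) := by
      rw [hlog1r]
      ring
    linarith [hsum2]
  have hgoal : (m:ℝ) * (2 * r ^ J + 6 * (1 - r)) = (m:ℝ)*(2*r^J) + (m:ℝ)*(6*(1-r)) := by ring
  rw [hgoal]
  linarith [hXXm, hsumf]

lemma orbit_prod_bound (τ : ℝ → ℝ) (hτbij : Set.BijOn τ (Set.Icc 0 1) (Set.Icc 0 1))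
    (l : ℕ) (s x₀ : Fin (l+1) → ℝ) (hs : ∀ i, 0 < s i)
    (hx₀ : ∀ i, x₀ i ∈ Set.Icc (0:ℝ) 1)
    {x : ℝ} (hx : x ∈ Set.Ico (0:ℝ) 1) {m : ℕ} (hm : 1 ≤ m)
    {r : ℝ} (hr : 1/2 ≤ r) (hr1 : r < 1) (J : ℕ) :
    ∏ k ∈ Finset.Icc 1 m, vabs l s x₀ (τ^[k] x) ≤
      Real.exp ((∑ i, s i) *
        ((m:ℝ) * (2 * r ^ J + 6 * (1 - r)) +
          2 * m * tauDiscrepancy τ m * J * Real.log (1/r))) := by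
  classical
  set ω := fun n => τ^[n] x with hω
  by_cases hz : ∃ k ∈ Finset.Icc 1 m, ∃ i : Fin (l+1), ω k = x₀ i
  · obtain ⟨k, hk, i, hki⟩ := hz
    have hzero : vabs l s x₀ (ω k) = 0 := by
      unfold vabs
      have : |ω k - x₀ i| ^ (s i) = 0 := by
        rw [hki, sub_self, abs_zero, Real.zero_rpow (hs i).ne']
      rw [Finset.prod_eq_zero (Finset.mem_univ i) this, mul_zero]
    rw [Finset.prod_eq_zero hk hzero]
    exact Real.exp_nonneg _
  · push_neg at hz
    have hne : ∀ i : Fin (l+1), ∀ k ∈ Finset.Icc 1 m, ω k ≠ x₀ i := by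
      intro i k hk
      exact hz k hk i
    have hpos : ∀ k ∈ Finset.Icc 1 m, ∀ i : Fin (l+1), 0 < |ω k - x₀ i| := by
      intro k hk i
      exact abs_pos.mpr (sub_ne_zero.mpr (hne i k hk))
    have hvexp : ∀ k ∈ Finset.Icc 1 m, vabs l s x₀ (ω k) =
        Real.exp ((∑ i, s i * XX (x₀ i)) + ∑ i, s i * Real.log |ω k - x₀ i|) := by
      intro k hk
      unfold vabs
      rw [Real.exp_add]
      congr 1
      rw [Real.exp_sum]
      apply Finset.prod_congr rfl
      intro i _
      rw [Real.rpow_def_of_pos (hpos k hk i), mul_comm]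
    rw [Finset.prod_congr rfl hvexp, ← Real.exp_sum]
    apply Real.exp_le_exp.mpr
    have hsplit : ∑ k ∈ Finset.Icc 1 m,
        ((∑ i, s i * XX (x₀ i)) + ∑ i, s i * Real.log |ω k - x₀ i|)
        = ∑ i, s i * ((m:ℝ) * XX (x₀ i) + ∑ k ∈ Finset.Icc 1 m, Real.log |ω k - x₀ i|) := by
      rw [Finset.sum_add_distrib, Finset.sum_const, Nat.card_Icc, Nat.add_sub_cancel,
        nsmul_eq_mul, Finset.sum_comm]
      rw [Finset.mul_sum]
      rw [← Finset.sum_add_distrib]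
      apply Finset.sum_congr rfl
      intro i _
      rw [mul_add, Finset.mul_sum]
      congr 1
      ring
    rw [hsplit]
    have hEb : ∀ i : Fin (l+1),
        (m:ℝ) * XX (x₀ i) + ∑ k ∈ Finset.Icc 1 m, Real.log |ω k - x₀ i| ≤
          (m:ℝ) * (2 * r ^ J + 6 * (1 - r)) +
            2 * m * tauDiscrepancy τ m * J * Real.log (1/r) := by
      intro i
      exact orbit_log_sum τ hτbij hx hm (hx₀ i).1 (hx₀ i).2 hr hr1 J (hne i)
    rw [Finset.sum_mul]
    apply Finset.sum_le_sum
    intro i _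
    exact mul_le_mul_of_nonneg_left (hEb i) (hs i).le

set_option maxHeartbeats 2000000 in
lemma orbit_prod_bound_final (τ : ℝ → ℝ) (hτbij : Set.BijOn τ (Set.Icc 0 1) (Set.Icc 0 1))
    (l : ℕ) (s x₀ : Fin (l+1) → ℝ) (hs : ∀ i, 0 < s i)
    (hx₀ : ∀ i, x₀ i ∈ Set.Icc (0:ℝ) 1)
    (ε' C₁ : ℝ) (hε' : 0 < ε') (hε'1 : ε' ≤ 1) (hC₁ : 1 ≤ C₁)
    (hDisc : ∀ m : ℕ, 3 ≤ m → tauDiscrepancy τ m ≤ C₁ / (Real.log m) ^ ((3:ℝ) + ε'))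
    {m : ℕ} (hm : 3 ≤ m) {x : ℝ} (hx : x ∈ Set.Ico (0:ℝ) 1) :
    ∏ k ∈ Finset.Icc 1 m, vabs l s x₀ (τ^[k] x) ≤
      Real.exp ((∑ i, s i) *
        (1 + (3 + 12*C₁) * ((m:ℝ) * ((Real.log m) ^ ((2:ℝ) + ε'/2))⁻¹))) := by
  have hm1 : 1 ≤ m := by omega
  have hmR : (3:ℝ) ≤ (m:ℝ) := by exact_mod_cast hm
  have hm0R : (0:ℝ) < (m:ℝ) := by linarith
  set L := Real.log m with hLdef
  have hL1 : 1 ≤ L := by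
    rw [hLdef]
    rw [Real.le_log_iff_exp_le hm0R]
    calc Real.exp 1 ≤ 2.7182818286 := (Real.exp_one_lt_d9).le
      _ ≤ (m:ℝ) := by linarith
  have hL0 : 0 < L := by linarith
  set q : ℝ := (2:ℝ) + ε'/2 with hqdef
  have hq2 : (2:ℝ) ≤ q := by rw [hqdef]; linarith
  set Lq := L ^ q with hLqdef
  have hLq1 : 1 ≤ Lq := Real.one_le_rpow hL1 (by linarith)
  have hLq0 : 0 < Lq := by linarith
  set δ := (2*Lq)⁻¹ with hδdef
  have hδ0 : 0 < δ := by positivity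
  have hδhalf : δ ≤ 1/2 := by
    rw [hδdef]
    rw [inv_le_comm₀ (by linarith) (by norm_num)]
    linarith
  set r := 1 - δ with hrdef
  have hrhalf : 1/2 ≤ r := by rw [hrdef]; linarith
  have hr1 : r < 1 := by rw [hrdef]; linarith
  have hr0 : 0 < r := by linarith
  set J := ⌈4*L*Lq⌉₊ with hJdef
  have hJge : 4*L*Lq ≤ (J:ℝ) := Nat.le_ceil _
  have hJle : (J:ℝ) ≤ 4*L*Lq + 1 := by
    have := Nat.ceil_lt_add_one (show (0:ℝ) ≤ 4*L*Lq by positivity)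
    linarith
  set D := tauDiscrepancy τ m with hDdef
  have hD0 : 0 ≤ D := tauDiscrepancy_nonneg τ hm1
  -- bound on D
  have hL3 : (1:ℝ) ≤ L ^ ((3:ℝ) + ε') := Real.one_le_rpow hL1 (by linarith)
  have hDle : D ≤ C₁ * (L ^ ((3:ℝ) + ε'))⁻¹ := by
    have := hDisc m hm
    rw [div_eq_mul_inv] at this
    exact this
  -- r^J bound
  have hrJ : r ^ J ≤ ((m:ℝ)^2)⁻¹ := by
    have h1 : r ≤ Real.exp (-δ) := by
      have := Real.add_one_le_exp (-δ)
      rw [hrdef]; linarith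
    have h2 : r ^ J ≤ (Real.exp (-δ)) ^ J := pow_le_pow_left₀ hr0.le h1 J
    have h3 : (Real.exp (-δ)) ^ J = Real.exp ((J:ℝ) * (-δ)) := by
      rw [← Real.exp_nat_mul]
    have hJδ : 2*L ≤ (J:ℝ) * δ := by
      have h4 : 4*L*Lq*δ ≤ (J:ℝ)*δ := mul_le_mul_of_nonneg_right hJge hδ0.le
      have h5 : 4*L*Lq*δ = 2*L := by
        rw [hδdef]
        field_simp
        ring
      linarith
    have h6 : Real.exp ((J:ℝ) * (-δ)) ≤ Real.exp (-(2*L)) := by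
      apply Real.exp_le_exp.mpr
      nlinarith
    have h7 : Real.exp (-(2*L)) = ((m:ℝ)^2)⁻¹ := by
      rw [Real.exp_neg]
      congr 1
      rw [show (2:ℝ)*L = L + L by ring, Real.exp_add, Real.exp_log hm0R]
      ring
    calc r ^ J ≤ (Real.exp (-δ)) ^ J := h2
      _ = Real.exp ((J:ℝ) * (-δ)) := h3
      _ ≤ Real.exp (-(2*L)) := h6
      _ = ((m:ℝ)^2)⁻¹ := h7
  have h2mrJ : (m:ℝ) * (2 * r ^ J) ≤ 1 := by
    have h1 : (m:ℝ) * (2 * r ^ J) ≤ (m:ℝ) * (2 * ((m:ℝ)^2)⁻¹) :=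
      mul_le_mul_of_nonneg_left (by nlinarith [hrJ]) hm0R.le
    have h2 : (m:ℝ) * (2 * ((m:ℝ)^2)⁻¹) = 2 / (m:ℝ) := by
      field_simp
    rw [h2] at h1
    have : 2 / (m:ℝ) ≤ 1 := by
      rw [div_le_one hm0R]; linarith
    linarith
  have h6mδ : (m:ℝ) * (6 * (1 - r)) = 3 * ((m:ℝ) * Lq⁻¹) := by
    rw [hrdef, hδdef]
    field_simp
    ring
  -- log(1/r) ≤ 2δ
  have hlog1r : Real.log (1/r) ≤ 2*δ := by
    have h1 : Real.log (1/r) ≤ 1/r - 1 := Real.log_le_sub_one_of_pos (by positivity)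
    have h2 : 1/r ≤ 1 + 2*δ := by
      rw [div_le_iff₀ hr0, hrdef]
      nlinarith
    linarith
  have hlog1r0 : 0 ≤ Real.log (1/r) := by
    rw [one_div, Real.log_inv, neg_nonneg]
    exact Real.log_nonpos hr0.le hr1.le
  -- error term
  have herr : 2 * (m:ℝ) * D * J * Real.log (1/r) ≤ 10 * C₁ * ((m:ℝ) * Lq⁻¹) := by
    have hJlog : (J:ℝ) * Real.log (1/r) ≤ 5*L := by
      have h1 : (J:ℝ) * Real.log (1/r) ≤ (4*L*Lq + 1) * (2*δ) := by
        apply mul_le_mul hJle hlog1r hlog1r0 (by positivity)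
      have h2 : (4*L*Lq + 1) * (2*δ) = 4*L + 2*δ := by
        rw [hδdef]
        field_simp
      have h3 : 2*δ ≤ 1 := by linarith
      have h4 : (1:ℝ) ≤ L := hL1
      rw [h2] at h1
      linarith
    have hDL : D * (5*L) ≤ 5 * C₁ * (L ^ ((2:ℝ)+ε'))⁻¹ := by
      have h1 : D * (5*L) ≤ (C₁ * (L ^ ((3:ℝ) + ε'))⁻¹) * (5*L) := by
        apply mul_le_mul_of_nonneg_right hDle (by positivity)
      have h2 : L ^ ((3:ℝ) + ε') = L * L ^ ((2:ℝ) + ε') := by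
        rw [show (3:ℝ) + ε' = 1 + ((2:ℝ) + ε') by ring, Real.rpow_add hL0, Real.rpow_one]
      have h3 : (C₁ * (L ^ ((3:ℝ) + ε'))⁻¹) * (5*L) = 5 * C₁ * (L ^ ((2:ℝ)+ε'))⁻¹ := by
        rw [h2]
        have hLne : L ≠ 0 := hL0.ne'
        have hL2e : L ^ ((2:ℝ)+ε') ≠ 0 := (Real.rpow_pos_of_pos hL0 _).ne'
        field_simp
      rw [h3] at h1
      exact h1
    have hLqle : (L ^ ((2:ℝ)+ε'))⁻¹ ≤ Lq⁻¹ := by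
      apply inv_anti₀ hLq0
      rw [hLqdef]
      apply Real.rpow_le_rpow_of_exponent_le hL1
      rw [hqdef]; linarith
    calc 2 * (m:ℝ) * D * J * Real.log (1/r)
        = (m:ℝ) * (2 * D) * ((J:ℝ) * Real.log (1/r)) := by ring
      _ ≤ (m:ℝ) * (2 * D) * (5*L) := by
          apply mul_le_mul_of_nonneg_left hJlog (by positivity)
      _ = 2 * (m:ℝ) * (D * (5*L)) := by ring
      _ ≤ 2 * (m:ℝ) * (5 * C₁ * (L ^ ((2:ℝ)+ε'))⁻¹) := by
          apply mul_le_mul_of_nonneg_left hDL (by positivity)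
      _ ≤ 2 * (m:ℝ) * (5 * C₁ * Lq⁻¹) := by
          apply mul_le_mul_of_nonneg_left _ (by positivity)
          apply mul_le_mul_of_nonneg_left hLqle (by positivity)
      _ = 10 * C₁ * ((m:ℝ) * Lq⁻¹) := by ring
  -- total
  have htot : (m:ℝ) * (2 * r ^ J + 6 * (1 - r)) +
      2 * (m:ℝ) * D * J * Real.log (1/r) ≤
        1 + (3 + 12*C₁) * ((m:ℝ) * Lq⁻¹) := by
    have hmLq : 0 ≤ (m:ℝ) * Lq⁻¹ := by positivity
    have hsplit : (m:ℝ) * (2 * r ^ J + 6 * (1 - r)) =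
        (m:ℝ) * (2 * r ^ J) + (m:ℝ) * (6 * (1-r)) := by ring
    nlinarith [h2mrJ, herr]
  refine le_trans (orbit_prod_bound τ hτbij l s x₀ hs hx₀ hx hm1 hrhalf hr1 J) ?_
  apply Real.exp_le_exp.mpr
  apply mul_le_mul_of_nonneg_left htot
  apply Finset.sum_nonneg
  intro i _
  exact (hs i).le

lemma vabs_le_exp (l : ℕ) (s x₀ : Fin (l+1) → ℝ) (hs : ∀ i, 0 < s i)
    (hx₀ : ∀ i, x₀ i ∈ Set.Icc (0:ℝ) 1) {x : ℝ} (hx : x ∈ Set.Icc (0:ℝ) 1) :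
    vabs l s x₀ x ≤ Real.exp (∑ i, s i * XX (x₀ i)) := by
  unfold vabs
  have h1 : ∏ i, |x - x₀ i| ^ (s i) ≤ 1 := by
    apply Finset.prod_le_one
    · intro i _
      exact Real.rpow_nonneg (abs_nonneg _) _
    · intro i _
      apply Real.rpow_le_one (abs_nonneg _) _ (hs i).le
      rw [Set.mem_Icc] at hx
      have := hx₀ i
      rw [Set.mem_Icc] at this
      rw [abs_le]
      constructor <;> linarith [this.1, this.2, hx.1, hx.2]
  nlinarith [Real.exp_nonneg (∑ i, s i * XX (x₀ i)), h1,
    Finset.prod_nonneg (fun i (_ : i ∈ Finset.univ) => Real.rpow_nonneg (abs_nonneg (x - x₀ i)) (s i))]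

lemma summable_aux {q : ℝ} (hq : 1 < q) :
    Summable (fun n : ℕ => (((n:ℝ)+2) * (Real.log ((n:ℝ)+2)) ^ q)⁻¹) := by
  have hq0 : 0 ≤ q := by linarith
  set f : ℕ → ℝ := fun n => (((n:ℝ)+2) * (Real.log ((n:ℝ)+2)) ^ q)⁻¹ with hf
  have hden : ∀ n : ℕ, 0 < ((n:ℝ)+2) * (Real.log ((n:ℝ)+2)) ^ q := by
    intro n
    apply mul_pos (by positivity)
    apply Real.rpow_pos_of_pos
    apply Real.log_pos
    have : (0:ℝ) ≤ (n:ℝ) := Nat.cast_nonneg n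
    linarith
  have hnn : ∀ n, 0 ≤ f n := fun n => (inv_nonneg).mpr (hden n).le
  have hlog2 : (0:ℝ) < Real.log 2 := Real.log_pos (by norm_num)
  have hmono : ∀ ⦃a b : ℕ⦄, 0 < a → a ≤ b → f b ≤ f a := by
    intro a b _ hab
    apply inv_anti₀ (hden a)
    have habR : ((a:ℝ)+2) ≤ ((b:ℝ)+2) := by
      have : (a:ℝ) ≤ (b:ℝ) := by exact_mod_cast hab
      linarith
    have hla : (0:ℝ) ≤ Real.log ((a:ℝ)+2) := by
      apply Real.log_nonneg
      have : (0:ℝ) ≤ (a:ℝ) := Nat.cast_nonneg a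
      linarith
    have hlog : Real.log ((a:ℝ)+2) ≤ Real.log ((b:ℝ)+2) :=
      Real.log_le_log (by positivity) habR
    exact mul_le_mul habR (Real.rpow_le_rpow hla hlog hq0) (Real.rpow_nonneg hla q)
      (by positivity)
  rw [← summable_condensed_iff_of_nonneg hnn hmono]
  rw [← summable_nat_add_iff 1]
  have hbound : ∀ k : ℕ, (2:ℝ) ^ (2 ^ (k+1)) * 0 = 0 := by intro k; ring
  have hbnd : ∀ k : ℕ, (2:ℝ) ^ (k+1) * f (2 ^ (k+1)) ≤
      ((Real.log 2) ^ q)⁻¹ * ((((k:ℕ):ℝ)+1) ^ q)⁻¹ := by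
    intro k
    have hA : ((2 ^ (k+1) : ℕ) : ℝ) = (2:ℝ)^(k+1) := by push_cast; ring
    have h2kpos : (0:ℝ) < (2:ℝ)^(k+1) := by positivity
    have hfval : f (2 ^ (k+1)) = (((2:ℝ)^(k+1) + 2) * (Real.log ((2:ℝ)^(k+1) + 2)) ^ q)⁻¹ := by
      rw [hf]
      simp only [hA]
    have hge : (2:ℝ) ^ (k+1) ≤ (2:ℝ)^(k+1) + 2 := by linarith
    have hlogge : ((k:ℝ)+1) * Real.log 2 ≤ Real.log ((2:ℝ)^(k+1) + 2) := by
      have h1 : Real.log ((2:ℝ) ^ (k+1)) ≤ Real.log ((2:ℝ)^(k+1) + 2) :=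
        Real.log_le_log h2kpos hge
      rw [Real.log_pow] at h1
      push_cast at h1
      linarith
    have hlogpos : (0:ℝ) < ((k:ℝ)+1) * Real.log 2 := by positivity
    have hrpow : (((k:ℝ)+1) * Real.log 2) ^ q ≤ (Real.log ((2:ℝ)^(k+1) + 2)) ^ q :=
      Real.rpow_le_rpow hlogpos.le hlogge hq0
    have hfle : f (2 ^ (k+1)) ≤ (((2:ℝ) ^ (k+1)) * (((k:ℝ)+1) * Real.log 2) ^ q)⁻¹ := by
      rw [hfval]
      apply inv_anti₀ (by positivity)
      exact mul_le_mul hge hrpow (Real.rpow_nonneg hlogpos.le q) (by positivity)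
    calc (2:ℝ) ^ (k+1) * f (2 ^ (k+1))
        ≤ (2:ℝ) ^ (k+1) * (((2:ℝ) ^ (k+1)) * (((k:ℝ)+1) * Real.log 2) ^ q)⁻¹ :=
          mul_le_mul_of_nonneg_left hfle h2kpos.le
      _ = ((((k:ℝ)+1) * Real.log 2) ^ q)⁻¹ := by
          rw [mul_inv, ← mul_assoc, mul_inv_cancel₀ h2kpos.ne', one_mul]
      _ = ((Real.log 2) ^ q)⁻¹ * (((k:ℝ)+1) ^ q)⁻¹ := by
          rw [Real.mul_rpow (by positivity) hlog2.le, mul_inv, mul_comm]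
  apply Summable.of_nonneg_of_le (fun k => mul_nonneg (by positivity) (hnn _)) hbnd
  apply Summable.mul_left
  have h0 : Summable (fun k : ℕ => (((k:ℕ):ℝ) ^ q)⁻¹) := Real.summable_nat_rpow_inv.mpr hq
  have h1 := (summable_nat_add_iff 1).mpr h0
  apply h1.congr
  intro k
  push_cast
  ring_nf

lemma prod_range_eq (g : ℕ → ℝ) (n : ℕ) (hn : 1 ≤ n) :
    ∏ k ∈ Finset.range n, g k = g 0 * ∏ k ∈ Finset.Icc 1 (n-1), g k := by
  obtain ⟨m, rfl⟩ : ∃ m, n = m + 1 := ⟨n-1, by omega⟩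
  rw [Finset.prod_range_succ']
  simp only [Nat.add_sub_cancel]
  rw [mul_comm]
  congr 1
  rw [show Finset.Icc 1 m = Finset.Ico 1 (m+1) by rw [Finset.Ico_add_one_right_eq_Icc]]
  rw [Finset.prod_Ico_eq_prod_range]
  simp only [Nat.add_sub_cancel]
  apply Finset.prod_congr rfl
  intro k _
  rw [add_comm]

lemma pow_apply_ae
    (p : ℝ≥0∞) [Fact (1 ≤ p)]
    (τ : ℝ → ℝ) (hτerg : Ergodic τ (volume.restrict (Set.Icc (0:ℝ) 1)))
    (l : ℕ) (s x₀ : Fin (l+1) → ℝ) (σ : Fin (l+1) → ℝ → ℝ)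
    (T : Lp ℂ p (volume.restrict (Set.Icc (0:ℝ) 1)) →L[ℂ]
         Lp ℂ p (volume.restrict (Set.Icc (0:ℝ) 1)))
    (hT : ∀ f : Lp ℂ p (volume.restrict (Set.Icc (0:ℝ) 1)),
      (T f : ℝ → ℂ) =ᵐ[volume.restrict (Set.Icc (0:ℝ) 1)]
        fun x => (vtilde l s x₀ σ x : ℂ) * f (τ x))
    (n : ℕ) (f : Lp ℂ p (volume.restrict (Set.Icc (0:ℝ) 1))) :
    ((T ^ n) f : ℝ → ℂ) =ᵐ[volume.restrict (Set.Icc (0:ℝ) 1)]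
      fun x => (∏ k ∈ Finset.range n, (vtilde l s x₀ σ (τ^[k] x) : ℂ)) * f (τ^[n] x) := by
  induction n with
  | zero =>
    simp only [pow_zero, ContinuousLinearMap.one_apply, Finset.range_zero, Finset.prod_empty,
      Function.iterate_zero, id_eq, one_mul]
    exact Filter.EventuallyEq.rfl
  | succ n ih =>
    have h1 : (T ^ (n+1)) f = T ((T ^ n) f) := by
      rw [pow_succ']
      rfl
    have hqmp := hτerg.toMeasurePreserving.quasiMeasurePreserving
    have h2 := hqmp.ae_eq ih
    have h3 := hT ((T ^ n) f)
    rw [h1]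
    refine h3.trans ?_
    have h4 : (fun x => (vtilde l s x₀ σ x : ℂ) * ((T ^ n) f : ℝ → ℂ) (τ x))
        =ᵐ[volume.restrict (Set.Icc (0:ℝ) 1)]
          fun x => (vtilde l s x₀ σ x : ℂ) *
            ((∏ k ∈ Finset.range n, (vtilde l s x₀ σ (τ^[k] (τ x)) : ℂ)) * f (τ^[n] (τ x))) := by
      filter_upwards [h2] with x hx
      simp only [Function.comp] at hx
      rw [hx]
    refine h4.trans ?_
    apply Filter.EventuallyEq.of_eq
    funext x
    simp only [← Function.iterate_succ_apply]
    rw [Finset.prod_range_succ']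
    simp only [Function.iterate_zero, id_eq]
    ring

lemma norm_pow_apply_le
    (p : ℝ≥0∞) [Fact (1 ≤ p)]
    (τ : ℝ → ℝ) (hτerg : Ergodic τ (volume.restrict (Set.Icc (0:ℝ) 1)))
    (l : ℕ) (s x₀ : Fin (l+1) → ℝ) (σ : Fin (l+1) → ℝ → ℝ)
    (T : Lp ℂ p (volume.restrict (Set.Icc (0:ℝ) 1)) →L[ℂ]
         Lp ℂ p (volume.restrict (Set.Icc (0:ℝ) 1)))
    (hT : ∀ f : Lp ℂ p (volume.restrict (Set.Icc (0:ℝ) 1)),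
      (T f : ℝ → ℂ) =ᵐ[volume.restrict (Set.Icc (0:ℝ) 1)]
        fun x => (vtilde l s x₀ σ x : ℂ) * f (τ x))
    (n : ℕ) {Bnd : ℝ} (hBnd : 0 ≤ Bnd)
    (hb : ∀ᵐ x ∂(volume.restrict (Set.Icc (0:ℝ) 1)),
      ‖∏ k ∈ Finset.range n, (vtilde l s x₀ σ (τ^[k] x) : ℂ)‖ ≤ Bnd)
    (f : Lp ℂ p (volume.restrict (Set.Icc (0:ℝ) 1))) :
    ‖(T ^ n) f‖ ≤ Bnd * ‖f‖ := by
  have hae := pow_apply_ae p τ hτerg l s x₀ σ T hT n f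
  rw [Lp.norm_def, eLpNorm_congr_ae hae]
  have hBC : ‖(Bnd:ℂ)‖ = Bnd := by
    rw [Complex.norm_real, Real.norm_eq_abs, abs_of_nonneg hBnd]
  have hmono : eLpNorm
      (fun x => (∏ k ∈ Finset.range n, (vtilde l s x₀ σ (τ^[k] x) : ℂ)) * f (τ^[n] x))
      p (volume.restrict (Set.Icc (0:ℝ) 1)) ≤
      eLpNorm ((Bnd:ℂ) • ((f : ℝ → ℂ) ∘ τ^[n])) p (volume.restrict (Set.Icc (0:ℝ) 1)) := by
    apply eLpNorm_mono_ae
    filter_upwards [hb] with x hx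
    rw [norm_mul]
    simp only [Pi.smul_apply, Function.comp_apply, norm_smul, hBC]
    exact mul_le_mul_of_nonneg_right hx (norm_nonneg _)
  have hsmul : eLpNorm ((Bnd:ℂ) • ((f : ℝ → ℂ) ∘ τ^[n])) p (volume.restrict (Set.Icc (0:ℝ) 1))
      = (‖(Bnd:ℂ)‖₊ : ℝ≥0∞) * eLpNorm ((f : ℝ → ℂ) ∘ τ^[n]) p (volume.restrict (Set.Icc (0:ℝ) 1)) :=
    eLpNorm_const_smul _ _ _ _
  have hcomp : eLpNorm ((f : ℝ → ℂ) ∘ τ^[n]) p (volume.restrict (Set.Icc (0:ℝ) 1))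
      = eLpNorm (f : ℝ → ℂ) p (volume.restrict (Set.Icc (0:ℝ) 1)) :=
    eLpNorm_comp_measurePreserving (Lp.aestronglyMeasurable f)
      (hτerg.toMeasurePreserving.iterate n)
  have hfin : (‖(Bnd:ℂ)‖₊ : ℝ≥0∞) * eLpNorm (f : ℝ → ℂ) p (volume.restrict (Set.Icc (0:ℝ) 1)) ≠ ⊤ :=
    ENNReal.mul_ne_top ENNReal.coe_ne_top (Lp.eLpNorm_lt_top f).ne
  have hle := le_trans hmono (le_of_eq (hsmul.trans (by rw [hcomp])))
  have := ENNReal.toReal_mono hfin hle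
  refine le_trans this ?_
  rw [ENNReal.toReal_mul, ENNReal.coe_toReal, coe_nnnorm, hBC, Lp.norm_def]

end PPB

open PPB in
set_option maxHeartbeats 1000000 in
theorem positive_power_bounds
    (p : ℝ≥0∞) [Fact (1 ≤ p)]
    (τ : ℝ → ℝ)
    (hτbij : Set.BijOn τ (Set.Icc 0 1) (Set.Icc 0 1))
    (hτerg : Ergodic τ (volume.restrict (Set.Icc (0:ℝ) 1)))
    (ε : ℝ) (hε : 0 < ε)
    (hD : ∃ C : ℝ, ∀ n : ℕ, 2 ≤ n →
      tauDiscrepancy τ n ≤ C / (Real.log n) ^ (3 + ε))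
    (l : ℕ) (s x₀ : Fin (l+1) → ℝ) (σ : Fin (l+1) → ℝ → ℝ)
    (hs : ∀ i, 0 < s i) (hx₀ : ∀ i, x₀ i ∈ Set.Icc (0:ℝ) 1)
    (hσ : ∀ i, σ i = id ∨ σ i = fun y => |y|)
    (T : Lp ℂ p (volume.restrict (Set.Icc (0:ℝ) 1)) →L[ℂ]
         Lp ℂ p (volume.restrict (Set.Icc (0:ℝ) 1)))
    (hT : ∀ f : Lp ℂ p (volume.restrict (Set.Icc (0:ℝ) 1)),
      (T f : ℝ → ℂ) =ᵐ[volume.restrict (Set.Icc (0:ℝ) 1)]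
        fun x => (vtilde l s x₀ σ x : ℂ) * f (τ x)) :
    ∃ w : ℕ → ℝ, (∀ n, 0 ≤ w n) ∧ (∀ m n, w (m + n) ≤ w m + w n) ∧
      Summable (fun n : ℕ => w n / (n : ℝ) ^ 2) ∧
      ∀ (n : ℕ) (f : Lp ℂ p (volume.restrict (Set.Icc (0:ℝ) 1))),
        ‖(T ^ n) f‖ ≤ Real.exp (w n) * ‖f‖ := by
  classical
  obtain ⟨C, hC⟩ := hD
  set ε' : ℝ := min ε 1 with hε'def
  have hε'0 : 0 < ε' := lt_min hε one_pos
  have hε'1 : ε' ≤ 1 := min_le_right _ _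
  set C₁ : ℝ := max C 1 with hC₁def
  have hC₁1 : (1:ℝ) ≤ C₁ := le_max_right _ _
  have hC₁0 : (0:ℝ) < C₁ := by linarith
  -- adjusted discrepancy bound
  have hDisc : ∀ m : ℕ, 3 ≤ m → tauDiscrepancy τ m ≤ C₁ / (Real.log m) ^ ((3:ℝ) + ε') := by
    intro m hm
    have hm2 : 2 ≤ m := by omega
    have h := hC m hm2
    have hmR : (3:ℝ) ≤ (m:ℝ) := by exact_mod_cast hm
    have hm0R : (0:ℝ) < (m:ℝ) := by linarith
    have hL1 : 1 ≤ Real.log m := by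
      rw [Real.le_log_iff_exp_le hm0R]
      calc Real.exp 1 ≤ 2.7182818286 := Real.exp_one_lt_d9.le
        _ ≤ (m:ℝ) := by linarith
    have hL0 : (0:ℝ) < Real.log m := by linarith
    have hee : (3:ℝ) + ε' ≤ 3 + ε := by
      have := min_le_left ε 1
      rw [hε'def]
      linarith [min_le_left ε 1]
    have he : (Real.log m) ^ ((3:ℝ) + ε') ≤ (Real.log m) ^ ((3:ℝ) + ε) :=
      Real.rpow_le_rpow_of_exponent_le hL1 hee
    have hpos : (0:ℝ) < (Real.log m) ^ ((3:ℝ) + ε') := Real.rpow_pos_of_pos hL0 _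
    have hpos2 : (0:ℝ) < (Real.log m) ^ ((3:ℝ) + ε) := Real.rpow_pos_of_pos hL0 _
    calc tauDiscrepancy τ m ≤ C / (Real.log m) ^ ((3:ℝ)+ε) := h
      _ ≤ C₁ / (Real.log m) ^ ((3:ℝ)+ε) := by
          gcongr
          exact le_max_left C 1
      _ ≤ C₁ / (Real.log m) ^ ((3:ℝ)+ε') := by
          gcongr
  -- constants
  have hXXnn : ∀ i, 0 ≤ XX (x₀ i) := by
    intro i
    have h := hx₀ i
    rw [Set.mem_Icc] at h
    have h1 : x₀ i * Real.log (x₀ i) ≤ 0 :=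
      mul_nonpos_iff.mpr (Or.inl ⟨h.1, Real.log_nonpos h.1 h.2⟩)
    have h2 : (1 - x₀ i) * Real.log (1 - x₀ i) ≤ 0 :=
      mul_nonpos_iff.mpr (Or.inl ⟨by linarith, Real.log_nonpos (by linarith) (by linarith)⟩)
    unfold XX
    linarith
  have hK0 : 0 ≤ ∑ i, s i * XX (x₀ i) :=
    Finset.sum_nonneg (fun i _ => mul_nonneg (hs i).le (hXXnn i))
  have hStot : 0 ≤ ∑ i, s i := Finset.sum_nonneg fun i _ => (hs i).le
  have hB : (0:ℝ) ≤ 3 + 12*C₁ := by linarith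
  have hq1 : (1:ℝ) < 2 + ε'/2 := by linarith
  set cb : ℕ → ℝ := fun m => (∑ i, s i * XX (x₀ i)) +
      (∑ i, s i) * (1 + (3 + 12*C₁) * ((m:ℝ) * ((Real.log m) ^ ((2:ℝ) + ε'/2))⁻¹)) with hcbdef
  have hlognn : ∀ m : ℕ, 0 ≤ Real.log m := by
    intro m
    rcases Nat.eq_zero_or_pos m with h | h
    · simp [h]
    · apply Real.log_nonneg
      exact_mod_cast h
  have hcb0 : ∀ m, 0 ≤ cb m := by
    intro m
    rw [hcbdef]
    have h1 : (0:ℝ) ≤ (m:ℝ) * ((Real.log m) ^ ((2:ℝ) + ε'/2))⁻¹ :=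
      mul_nonneg (Nat.cast_nonneg m) (inv_nonneg.mpr (Real.rpow_nonneg (hlognn m) _))
    have h2 : (0:ℝ) ≤ 1 + (3 + 12*C₁) * ((m:ℝ) * ((Real.log m) ^ ((2:ℝ) + ε'/2))⁻¹) := by
      nlinarith
    nlinarith
  -- a.e. product bound for n ≥ 4
  have hprod : ∀ n : ℕ, 4 ≤ n →
      ∀ᵐ x ∂(volume.restrict (Set.Icc (0:ℝ) 1)),
        ‖∏ k ∈ Finset.range n, (vtilde l s x₀ σ (τ^[k] x) : ℂ)‖ ≤ Real.exp (cb (n-1)) := by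
    intro n hn
    have h1 : (volume.restrict (Set.Icc (0:ℝ) 1)) {(1:ℝ)} = 0 := by
      rw [Measure.restrict_apply (measurableSet_singleton 1)]
      exact measure_mono_null Set.inter_subset_left Real.volume_singleton
    have hne1 : ∀ᵐ x ∂(volume.restrict (Set.Icc (0:ℝ) 1)), x ≠ 1 := by
      rw [ae_iff]
      convert h1 using 2
      ext x
      simp
    filter_upwards [ae_restrict_mem measurableSet_Icc, hne1] with x hxIcc hx1
    have hxIco : x ∈ Set.Ico (0:ℝ) 1 := ⟨hxIcc.1, lt_of_le_of_ne hxIcc.2 hx1⟩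
    have hnorm : ‖∏ k ∈ Finset.range n, (vtilde l s x₀ σ (τ^[k] x) : ℂ)‖ ≤
        ∏ k ∈ Finset.range n, vabs l s x₀ (τ^[k] x) := by
      rw [norm_prod]
      apply Finset.prod_le_prod (fun k _ => norm_nonneg _)
      intro k _
      exact norm_vtilde_le l s x₀ σ hσ _
    have hsplit := prod_range_eq (fun k => vabs l s x₀ (τ^[k] x)) n (by omega)
    have hm3 : 3 ≤ n - 1 := by omega
    have hv0 : vabs l s x₀ (τ^[0] x) ≤ Real.exp (∑ i, s i * XX (x₀ i)) := by
      simp only [Function.iterate_zero, id_eq]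
      exact vabs_le_exp l s x₀ hs hx₀ (Set.mem_Icc_of_Ico hxIco)
    have hrest := orbit_prod_bound_final τ hτbij l s x₀ hs hx₀ ε' C₁ hε'0 hε'1 hC₁1 hDisc hm3 hxIco
    have hprodnn : (0:ℝ) ≤ ∏ k ∈ Finset.Icc 1 (n-1), vabs l s x₀ (τ^[k] x) :=
      Finset.prod_nonneg (fun k _ => vabs_nonneg l s x₀ _)
    refine le_trans hnorm ?_
    rw [hsplit]
    have hmul := mul_le_mul hv0 hrest hprodnn (Real.exp_nonneg _)
    refine le_trans hmul (le_of_eq ?_)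
    rw [← Real.exp_add, hcbdef]
  -- operator norm bound for n ≥ 4
  have hTn : ∀ n : ℕ, 4 ≤ n → ‖T ^ n‖ ≤ Real.exp (cb (n-1)) := by
    intro n hn
    apply ContinuousLinearMap.opNorm_le_bound _ (Real.exp_nonneg _)
    intro f
    exact norm_pow_apply_le p τ hτerg l s x₀ σ T hT n (Real.exp_nonneg _) (hprod n hn) f
  -- define w
  refine ⟨fun n => Real.log (max ‖T ^ n‖ 1), ?_, ?_, ?_, ?_⟩
  · intro n
    exact Real.log_nonneg (le_max_right _ _)
  · intro m n
    have hmax1 : ∀ k : ℕ, (1:ℝ) ≤ max ‖T ^ k‖ 1 := fun k => le_max_right _ _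
    have hmax0 : ∀ k : ℕ, (0:ℝ) < max ‖T ^ k‖ 1 := fun k => lt_of_lt_of_le one_pos (hmax1 k)
    have hTm : ‖T ^ (m+n)‖ ≤ ‖T ^ m‖ * ‖T ^ n‖ := by
      rw [pow_add]
      exact norm_mul_le _ _
    have h1 : max ‖T ^ (m+n)‖ 1 ≤ max ‖T ^ m‖ 1 * max ‖T ^ n‖ 1 := by
      apply max_le
      · refine le_trans hTm ?_
        exact mul_le_mul (le_max_left _ _) (le_max_left _ _) (norm_nonneg _)
          (le_trans zero_le_one (hmax1 m))
      · nlinarith [hmax1 m, hmax1 n]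
    calc Real.log (max ‖T ^ (m+n)‖ 1) ≤ Real.log (max ‖T ^ m‖ 1 * max ‖T ^ n‖ 1) :=
          Real.log_le_log (hmax0 _) h1
      _ = Real.log (max ‖T ^ m‖ 1) + Real.log (max ‖T ^ n‖ 1) :=
          Real.log_mul (hmax0 m).ne' (hmax0 n).ne'
  · -- summability
    have hmax1 : ∀ k : ℕ, (1:ℝ) ≤ max ‖T ^ k‖ 1 := fun k => le_max_right _ _
    have hmax0 : ∀ k : ℕ, (0:ℝ) < max ‖T ^ k‖ 1 := fun k => lt_of_lt_of_le one_pos (hmax1 k)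
    have hwle : ∀ n : ℕ, 4 ≤ n → Real.log (max ‖T ^ n‖ 1) ≤ cb (n-1) := by
      intro n hn
      have h1 : max ‖T ^ n‖ 1 ≤ Real.exp (cb (n-1)) :=
        max_le (hTn n hn) (Real.one_le_exp (hcb0 _))
      calc Real.log (max ‖T ^ n‖ 1) ≤ Real.log (Real.exp (cb (n-1))) :=
            Real.log_le_log (hmax0 n) h1
        _ = cb (n-1) := Real.log_exp _
    have hsum2 : Summable (fun n : ℕ => (((n:ℝ)+4)^2)⁻¹) := by
      have h0 : Summable (fun n : ℕ => (((n:ℝ))^(2:ℝ))⁻¹) :=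
        Real.summable_nat_rpow_inv.mpr (by norm_num)
      have h0' : Summable (fun n : ℕ => (((n:ℝ))^2)⁻¹) := by
        apply h0.congr
        intro n
        rw [show ((2:ℝ)) = ((2:ℕ):ℝ) by norm_num, Real.rpow_natCast]
      have h4 := (summable_nat_add_iff 4).mpr h0'
      apply h4.congr
      intro n
      push_cast
      ring_nf
    have hsum3 : Summable (fun n : ℕ => (((n:ℝ)+3) * (Real.log ((n:ℝ)+3)) ^ ((2:ℝ)+ε'/2))⁻¹) := by
      have h0 := summable_aux hq1
      have h1 := (summable_nat_add_iff 1).mpr h0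
      apply h1.congr
      intro n
      have : ((n+1:ℕ):ℝ) + 2 = (n:ℝ) + 3 := by push_cast; ring
      rw [this]
    have hmaj : ∀ n : ℕ, Real.log (max ‖T ^ (n+4)‖ 1) / ((n+4:ℕ):ℝ)^2 ≤
        ((∑ i, s i * XX (x₀ i)) + (∑ i, s i)) * (((n:ℝ)+4)^2)⁻¹ +
        ((∑ i, s i) * (3+12*C₁)) * ((((n:ℝ)+3)) * (Real.log ((n:ℝ)+3)) ^ ((2:ℝ)+ε'/2))⁻¹ := by
      intro n
      have hw4 := hwle (n+4) (by omega)
      have hsub : (n+4)-1 = n+3 := by omega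
      rw [hsub] at hw4
      have hcast : ((n+3:ℕ):ℝ) = (n:ℝ)+3 := by push_cast; ring
      rw [hcbdef] at hw4
      simp only [hcast] at hw4
      set N3 : ℝ := (n:ℝ)+3 with hN3
      set N4 : ℝ := (n:ℝ)+4 with hN4
      set Lgq : ℝ := (Real.log N3) ^ ((2:ℝ)+ε'/2) with hLgq
      have hN30 : (0:ℝ) < N3 := by rw [hN3]; positivity
      have hN40 : (0:ℝ) < N4 := by rw [hN4]; positivity
      have hLgq0 : (0:ℝ) < Lgq := by
        rw [hLgq]
        apply Real.rpow_pos_of_pos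
        apply Real.log_pos
        rw [hN3]
        have : (0:ℝ) ≤ (n:ℝ) := Nat.cast_nonneg n
        linarith
      have hcast4 : ((n+4:ℕ):ℝ) = N4 := by rw [hN4]; push_cast; ring
      rw [hcast4]
      have hkey : N3 * (N4^2)⁻¹ ≤ N3⁻¹ := by
        have hsq : N3^2 ≤ N4^2 := by
          rw [hN3, hN4]
          nlinarith [Nat.cast_nonneg n (α := ℝ)]
        have heq : N3 * (N4^2)⁻¹ - N3⁻¹ = (N3^2 - N4^2)/(N3 * N4^2) := by
          field_simp
        have hle : (N3^2 - N4^2)/(N3 * N4^2) ≤ 0 :=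
          div_nonpos_of_nonpos_of_nonneg (by linarith) (by positivity)
        linarith [heq ▸ hle]
      have he1 : ((∑ i, s i * XX (x₀ i)) +
          (∑ i, s i) * (1 + (3 + 12*C₁) * (N3 * Lgq⁻¹))) / N4^2
          = ((∑ i, s i * XX (x₀ i)) + (∑ i, s i)) * (N4^2)⁻¹ +
            ((∑ i, s i) * (3+12*C₁)) * (Lgq⁻¹ * (N3 * (N4^2)⁻¹)) := by
        field_simp
        ring
      have he2 : ((∑ i, s i) * (3+12*C₁)) * (Lgq⁻¹ * (N3 * (N4^2)⁻¹)) ≤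
          ((∑ i, s i) * (3+12*C₁)) * (N3 * Lgq)⁻¹ := by
        have h3 : Lgq⁻¹ * (N3 * (N4^2)⁻¹) ≤ Lgq⁻¹ * N3⁻¹ :=
          mul_le_mul_of_nonneg_left hkey (inv_nonneg.mpr hLgq0.le)
        have h4 : Lgq⁻¹ * N3⁻¹ = (N3 * Lgq)⁻¹ := by
          rw [mul_inv]
          ring
        rw [← h4]
        exact mul_le_mul_of_nonneg_left h3 (mul_nonneg hStot hB)
      have hdiv : Real.log (max ‖T ^ (n+4)‖ 1) / N4^2 ≤
          ((∑ i, s i * XX (x₀ i)) +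
            (∑ i, s i) * (1 + (3 + 12*C₁) * (N3 * Lgq⁻¹))) / N4^2 :=
        (div_le_div_iff_of_pos_right (by positivity)).mpr hw4
      calc Real.log (max ‖T ^ (n+4)‖ 1) / N4^2
          ≤ ((∑ i, s i * XX (x₀ i)) +
              (∑ i, s i) * (1 + (3 + 12*C₁) * (N3 * Lgq⁻¹))) / N4^2 := hdiv
        _ = ((∑ i, s i * XX (x₀ i)) + (∑ i, s i)) * (N4^2)⁻¹ +
              ((∑ i, s i) * (3+12*C₁)) * (Lgq⁻¹ * (N3 * (N4^2)⁻¹)) := he1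
        _ ≤ ((∑ i, s i * XX (x₀ i)) + (∑ i, s i)) * (N4^2)⁻¹ +
              ((∑ i, s i) * (3+12*C₁)) * (N3 * Lgq)⁻¹ := by linarith [he2]
    have hnn : ∀ n : ℕ, 0 ≤ Real.log (max ‖T ^ (n+4)‖ 1) / ((n+4:ℕ):ℝ)^2 := by
      intro n
      apply div_nonneg (Real.log_nonneg (hmax1 _)) (by positivity)
    have hsummaj : Summable (fun n : ℕ =>
        ((∑ i, s i * XX (x₀ i)) + (∑ i, s i)) * (((n:ℝ)+4)^2)⁻¹ +
        ((∑ i, s i) * (3+12*C₁)) * ((((n:ℝ)+3)) * (Real.log ((n:ℝ)+3)) ^ ((2:ℝ)+ε'/2))⁻¹) :=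
      (hsum2.mul_left _).add (hsum3.mul_left _)
    have hs4 : Summable (fun n : ℕ => Real.log (max ‖T ^ (n+4)‖ 1) / ((n+4:ℕ):ℝ)^2) :=
      Summable.of_nonneg_of_le hnn hmaj hsummaj
    exact (summable_nat_add_iff 4).mp hs4
  · -- pointwise bound
    intro n f
    have hmax1 : (1:ℝ) ≤ max ‖T ^ n‖ 1 := le_max_right _ _
    have hmax0 : (0:ℝ) < max ‖T ^ n‖ 1 := lt_of_lt_of_le one_pos hmax1
    rw [Real.exp_log hmax0]
    calc ‖(T ^ n) f‖ ≤ ‖T ^ n‖ * ‖f‖ := (T ^ n).le_opNorm f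
      _ ≤ max ‖T ^ n‖ 1 * ‖f‖ := mul_le_mul_of_nonneg_right (le_max_left _ _) (norm_nonneg _)

end
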